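/- Exclusion lemma for minmax estimators (Lemma 2). Let E be a real vector space, F ⊆ E, f* ∈ F, 𝓑 ⊆ E, ‖·‖ : E → ℝ any function, λ ∈ ℝ, η > 0, and T : F × F → ℝ antisymmetric, i.e. T(f,g) = −T(g,f) for all f,g ∈ F. Assume: (i) for every f ∈ F with f − f* ∉ 𝓑, T(f*, f) + λ(‖f*‖ − ‖f‖) < −η; (ii) for every g ∈ F, T(f*, g) + λ(‖f*‖ − ‖g‖) ≤ η. Then every f̂ ∈ F satisfying sup_{g∈F}(T(f̂, g) + λ(‖f̂‖ − ‖g‖)) ≤ sup_{g∈F}(T(f*, g) + λ(‖f*‖ − ‖g‖)) satisfies f̂ − f* ∈ 𝓑. -/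
import Mathlib


/-- Exclusion lemma for minmax estimators (Lemma 2). -/
theorem minmax_exclusion_lemma
    {E : Type*} [AddCommGroup E] [Module ℝ E]
    (F : Set E) (fstar : E) (hfstar : fstar ∈ F)
    (𝓑 : Set E) (Nrm : E → ℝ) (lam : ℝ) (η : ℝ) (hη : 0 < η)
    (T : E → E → ℝ)
    (hanti : ∀ f ∈ F, ∀ g ∈ F, T f g = -T g f)
    (hi : ∀ f ∈ F, f - fstar ∉ 𝓑 →
      T fstar f + lam * (Nrm fstar - Nrm f) < -η)
    (hii : ∀ g ∈ F, T fstar g + lam * (Nrm fstar - Nrm g) ≤ η)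
    (fhat : E) (hfhatF : fhat ∈ F)
    (hmin : (⨆ g : F, ((T fhat g + lam * (Nrm fhat - Nrm (g : E)) : ℝ) : EReal)) ≤
      ⨆ g : F, ((T fstar g + lam * (Nrm fstar - Nrm (g : E)) : ℝ) : EReal)) :
    fhat - fstar ∈ 𝓑 := by
  by_contra hB
  have h1 : T fstar fhat + lam * (Nrm fstar - Nrm fhat) < -η := hi fhat hfhatF hB
  have h2 : η < T fhat fstar + lam * (Nrm fhat - Nrm fstar) := by
    have := hanti fhat hfhatF fstar hfstar
    nlinarith [h1]
  have hL : ((T fhat fstar + lam * (Nrm fhat - Nrm fstar) : ℝ) : EReal) ≤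
      ⨆ g : F, ((T fhat g + lam * (Nrm fhat - Nrm (g : E)) : ℝ) : EReal) :=
    le_iSup (fun g : F => ((T fhat g + lam * (Nrm fhat - Nrm (g : E)) : ℝ) : EReal))
      ⟨fstar, hfstar⟩
  have hR : (⨆ g : F, ((T fstar g + lam * (Nrm fstar - Nrm (g : E)) : ℝ) : EReal)) ≤
      (η : EReal) := by
    apply iSup_le
    intro g
    exact_mod_cast hii g g.2
  have : ((T fhat fstar + lam * (Nrm fhat - Nrm fstar) : ℝ) : EReal) ≤ (η : EReal) :=
    le_trans (le_trans hL hmin) hR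
  have : T fhat fstar + lam * (Nrm fhat - Nrm fstar) ≤ η := by exact_mod_cast this
  linarith
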